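/- (Lemma 4.) Let δ > 0, let Q = Qᵀ ∈ ℝ^{n×n} be positive definite, τ > 0, and let 𝒜_c ∈ ℝ^{n×n}, ℱ = I, ℋ ∈ ℝ^{n×n}, 𝒦 ∈ ℝ^{1×n}. If there exists ε₂ ∈ ℝ such that the 5×5 block matrix [[−Q, 0, 𝒦ᵀ, 𝒜_cᵀ, δℋᵀ], [0, −τQ, 0, 0, δI], [𝒦, 0, −(1/τ)I, 0, 0], [𝒜_c, 0, 0, −Q⁻¹ + ε₂I, 0], [δℋ, δI, 0, 0, −ε₂I]] is negative definite, then for every D ∈ ℝ^{n×n} with ‖D‖ ≤ δ the 4×4 block matrix [[−Q, 0, 𝒦ᵀ, (𝒜_c + ℱ D ℋ)ᵀ], [0, −τQ, 0, Dᵀ], [𝒦, 0, −(1/τ)I, 0], [𝒜_c + ℱ D ℋ, D, 0, −Q⁻¹]] is negative definite. -/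

import Mathlib

open Matrix
open scoped Matrix.Norms.L2Operator

/-- The 4×4 block matrix, with blocks of sizes `[n, n, 1, n]`,
`[[−Q, 0, 𝒦ᵀ, (𝒜c + ℱDℋ)ᵀ], [0, −τQ, 0, Dᵀ], [𝒦, 0, −(1/τ)I, 0],
[𝒜c + ℱDℋ, D, 0, −Q⁻¹]]`. -/
noncomputable def blockMat4 {n : ℕ}
    (Q D Ac F H : Matrix (Fin n) (Fin n) ℝ) (K : Matrix (Fin 1) (Fin n) ℝ)
    (τ : ℝ) :
    Matrix ((Fin n ⊕ Fin n) ⊕ (Fin 1 ⊕ Fin n)) ((Fin n ⊕ Fin n) ⊕ (Fin 1 ⊕ Fin n)) ℝ :=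
  Matrix.fromBlocks
    (Matrix.fromBlocks (-Q) 0 0 (-(τ • Q)))
    (Matrix.fromBlocks Kᵀ (Ac + F * D * H)ᵀ 0 Dᵀ)
    (Matrix.fromBlocks K 0 (Ac + F * D * H) D)
    (Matrix.fromBlocks (-((1 / τ) • (1 : Matrix (Fin 1) (Fin 1) ℝ))) 0 0 (-Q⁻¹))

/-- The 5×5 block matrix, with blocks of sizes `[n, n, 1, n, n]`,
`[[−Q, 0, 𝒦ᵀ, 𝒜cᵀ, δℋᵀ], [0, −τQ, 0, 0, δI], [𝒦, 0, −(1/τ)I, 0, 0],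
[𝒜c, 0, 0, −Q⁻¹ + ε₂I, 0], [δℋ, δI, 0, 0, −ε₂I]]`. -/
noncomputable def blockMat5 {n : ℕ}
    (Q Ac H : Matrix (Fin n) (Fin n) ℝ) (K : Matrix (Fin 1) (Fin n) ℝ)
    (τ δ ε₂ : ℝ) :
    Matrix (((Fin n ⊕ Fin n) ⊕ (Fin 1 ⊕ Fin n)) ⊕ Fin n)
      (((Fin n ⊕ Fin n) ⊕ (Fin 1 ⊕ Fin n)) ⊕ Fin n) ℝ :=
  Matrix.fromBlocks
    (Matrix.fromBlocks
      (Matrix.fromBlocks (-Q) 0 0 (-(τ • Q)))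
      (Matrix.fromBlocks Kᵀ Acᵀ 0 0)
      (Matrix.fromBlocks K 0 Ac 0)
      (Matrix.fromBlocks (-((1 / τ) • (1 : Matrix (Fin 1) (Fin 1) ℝ))) 0 0
        (-Q⁻¹ + ε₂ • (1 : Matrix (Fin n) (Fin n) ℝ))))
    (Matrix.fromRows
      (Matrix.fromRows (δ • Hᵀ) (δ • (1 : Matrix (Fin n) (Fin n) ℝ)))
      (Matrix.fromRows (0 : Matrix (Fin 1) (Fin n) ℝ) (0 : Matrix (Fin n) (Fin n) ℝ)))
    (Matrix.fromCols
      (Matrix.fromCols (δ • H) (δ • (1 : Matrix (Fin n) (Fin n) ℝ)))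
      (Matrix.fromCols (0 : Matrix (Fin n) (Fin 1) ℝ) (0 : Matrix (Fin n) (Fin n) ℝ)))
    (-(ε₂ • (1 : Matrix (Fin n) (Fin n) ℝ)))

private lemma vecMul_smulMat {m k : Type*} [Fintype m] (v : m → ℝ) (c : ℝ)
    (M : Matrix m k ℝ) : v ᵥ* (c • M) = c • (v ᵥ* M) := by
  ext i
  simp [Matrix.vecMul, dotProduct, Finset.mul_sum, mul_left_comm]

private lemma quad4E {n : ℕ} (Q D Ac H : Matrix (Fin n) (Fin n) ℝ)
    (K : Matrix (Fin 1) (Fin n) ℝ) (τ : ℝ) (a b d : Fin n → ℝ) (c : Fin 1 → ℝ) :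
    Sum.elim (Sum.elim a b) (Sum.elim c d) ⬝ᵥ
      blockMat4 Q D Ac 1 H K τ *ᵥ Sum.elim (Sum.elim a b) (Sum.elim c d) =
    a ⬝ᵥ a ᵥ* (-Q) + b ⬝ᵥ b ᵥ* (-(τ • Q)) +
      c ⬝ᵥ c ᵥ* (-(τ⁻¹ • (1 : Matrix (Fin 1) (Fin 1) ℝ))) + d ⬝ᵥ d ᵥ* (-Q⁻¹) +
      2 * (a ⬝ᵥ c ᵥ* K) + 2 * (a ⬝ᵥ d ᵥ* Ac) +
      (2 * (a ⬝ᵥ d ᵥ* (D * H)) + 2 * (b ⬝ᵥ d ᵥ* D)) := by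
  have hsym : a ᵥ* (Hᵀ * Dᵀ) ⬝ᵥ d = a ⬝ᵥ d ᵥ* (D * H) := by
    rw [← Matrix.transpose_mul, Matrix.vecMul_transpose, dotProduct_comm,
      Matrix.dotProduct_mulVec, dotProduct_comm]
  simp only [blockMat4, one_mul, Matrix.fromBlocks_mulVec,
    sumElim_dotProduct_sumElim, Matrix.add_mulVec,
    Matrix.mulVec_add, dotProduct_add, Matrix.mulVec_smul, dotProduct_smul,
    Matrix.mulVec_transpose, Matrix.dotProduct_mulVec, Matrix.vecMul_transpose,
    Matrix.transpose_add, Matrix.transpose_mul, Matrix.transpose_transpose,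
    Matrix.mulVec_zero, Matrix.zero_mulVec, dotProduct_zero, add_zero, zero_add,
    Matrix.vecMul_add, Matrix.add_vecMul, one_div, Sum.elim_comp_inl, Sum.elim_comp_inr]
  simp only [hsym, dotProduct_comm]
  ring

private lemma quad5E {n : ℕ} (Q Ac H : Matrix (Fin n) (Fin n) ℝ)
    (K : Matrix (Fin 1) (Fin n) ℝ) (τ δ ε₂ : ℝ) (a b d y : Fin n → ℝ) (c : Fin 1 → ℝ) :
    Sum.elim (Sum.elim (Sum.elim a b) (Sum.elim c d)) y ⬝ᵥ
      blockMat5 Q Ac H K τ δ ε₂ *ᵥ Sum.elim (Sum.elim (Sum.elim a b) (Sum.elim c d)) y =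
    a ⬝ᵥ a ᵥ* (-Q) + b ⬝ᵥ b ᵥ* (-(τ • Q)) +
      c ⬝ᵥ c ᵥ* (-(τ⁻¹ • (1 : Matrix (Fin 1) (Fin 1) ℝ))) + d ⬝ᵥ d ᵥ* (-Q⁻¹) +
      2 * (a ⬝ᵥ c ᵥ* K) + 2 * (a ⬝ᵥ d ᵥ* Ac) +
      (ε₂ * (d ⬝ᵥ d) + 2 * δ * (y ⬝ᵥ H *ᵥ a) + 2 * δ * (y ⬝ᵥ b) - ε₂ * (y ⬝ᵥ y)) := by
  simp only [blockMat5, Matrix.fromBlocks_mulVec,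
    sumElim_dotProduct_sumElim, Matrix.add_mulVec,
    Matrix.mulVec_add, dotProduct_add, Matrix.mulVec_smul, dotProduct_smul,
    Matrix.mulVec_transpose, Matrix.dotProduct_mulVec, Matrix.vecMul_transpose,
    Matrix.transpose_add, Matrix.transpose_mul, Matrix.transpose_transpose,
    Matrix.mulVec_zero, Matrix.zero_mulVec, dotProduct_zero, add_zero, zero_add,
    Matrix.vecMul_add, Matrix.add_vecMul, one_div, Sum.elim_comp_inl, Sum.elim_comp_inr,
    Matrix.fromRows_mulVec, Matrix.fromCols_mulVec_sumElim,
    vecMul_smulMat, Matrix.smul_mulVec, Matrix.one_mulVec, Matrix.vecMul_one,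
    smul_dotProduct, smul_eq_mul, Matrix.neg_mulVec, Matrix.vecMul_neg, dotProduct_neg,
    neg_add_rev, Matrix.neg_vecMul]
  simp only [dotProduct_comm]
  ring

/-- Lemma 4: if the 5×5 block matrix (depending only on the norm bound `δ`) is
negative definite for some `ε₂`, then the 4×4 block matrix is negative definite
for every `D` with `‖D‖ ≤ δ` (induced 2-norm). -/
theorem robustification {n : ℕ} (hn : 0 < n)
    (δ : ℝ) (hδ : 0 < δ)
    (Q : Matrix (Fin n) (Fin n) ℝ) (hQsym : Q = Qᵀ) (hQpd : Q.PosDef)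
    (τ : ℝ) (hτ : 0 < τ)
    (Ac : Matrix (Fin n) (Fin n) ℝ)
    (F : Matrix (Fin n) (Fin n) ℝ) (hF : F = 1)
    (H : Matrix (Fin n) (Fin n) ℝ)
    (K : Matrix (Fin 1) (Fin n) ℝ)
    (ε₂ : ℝ)
    (hblock5 : (-(blockMat5 Q Ac H K τ δ ε₂)).PosDef) :
    ∀ D : Matrix (Fin n) (Fin n) ℝ, ‖D‖ ≤ δ →
      (-(blockMat4 Q D Ac F H K τ)).PosDef := by
  subst hF
  intro D hD
  -- ε₂ is positive
  have hε : 0 < ε₂ := by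
    set w : Fin n → ℝ := fun _ => 1 with hw
    have hwne : Sum.elim (Sum.elim (Sum.elim (0 : Fin n → ℝ) (0 : Fin n → ℝ))
        (Sum.elim (0 : Fin 1 → ℝ) (0 : Fin n → ℝ))) w ≠ 0 := by
      intro h
      have := congrFun h (Sum.inr ⟨0, hn⟩)
      simpa [hw] using this
    have hpos := hblock5.dotProduct_mulVec_pos hwne
    rw [star_trivial] at hpos
    simp only [Matrix.neg_mulVec, dotProduct_neg] at hpos
    rw [quad5E] at hpos
    simp only [zero_dotProduct, dotProduct_zero, Matrix.mulVec_zero, Matrix.zero_vecMul,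
      Matrix.vecMul_zero, mul_zero, zero_mul, add_zero, zero_add, neg_zero, zero_sub,
      neg_neg, sub_zero] at hpos
    have hww : w ⬝ᵥ w = (n : ℝ) := by simp [dotProduct, hw]
    rw [hww] at hpos
    have hn' : (0 : ℝ) < n := by exact_mod_cast hn
    nlinarith [hpos, hn']
  refine Matrix.PosDef.of_dotProduct_mulVec_pos ?_ ?_
  · -- symmetry
    rw [Matrix.IsHermitian, Matrix.conjTranspose_eq_transpose_of_trivial, Matrix.transpose_neg]
    congr 1
    simp only [blockMat4, Matrix.fromBlocks_transpose, Matrix.transpose_neg,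
      Matrix.transpose_smul, Matrix.transpose_zero, Matrix.transpose_transpose,
      Matrix.transpose_one, Matrix.transpose_nonsing_inv, ← hQsym]
  · intro x hx
    obtain ⟨a, b, c, d, hxe⟩ : ∃ a b c d, x = Sum.elim (Sum.elim a b) (Sum.elim c d) :=
      ⟨_, _, _, _, by funext j; rcases j with (i | i) | (i | i) <;> rfl⟩
    subst hxe
    set z : Fin n → ℝ := H *ᵥ a + b with hz
    set y : Fin n → ℝ := (δ / ε₂) • z with hy
    have hvne : Sum.elim (Sum.elim (Sum.elim a b) (Sum.elim c d)) y ≠ 0 := by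
      intro h0
      apply hx
      funext j
      exact congrFun h0 (Sum.inl j)
    have hpos := hblock5.dotProduct_mulVec_pos hvne
    rw [star_trivial] at hpos
    simp only [Matrix.neg_mulVec, dotProduct_neg] at hpos
    rw [quad5E] at hpos
    rw [star_trivial]
    simp only [Matrix.neg_mulVec, dotProduct_neg]
    rw [quad4E]
    -- Euclidean norm facts
    have hinner : ∀ u w : Fin n → ℝ,
        (inner ℝ ((EuclideanSpace.equiv (Fin n) ℝ).symm u)
          ((EuclideanSpace.equiv (Fin n) ℝ).symm w) : ℝ) = u ⬝ᵥ w := by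
      intro u w
      simp [PiLp.inner_apply, RCLike.inner_apply, dotProduct, EuclideanSpace.equiv,
        PiLp.toLp_apply, conj_trivial, mul_comm]
    set nd := ‖(EuclideanSpace.equiv (Fin n) ℝ).symm d‖ with hnd
    set nz := ‖(EuclideanSpace.equiv (Fin n) ℝ).symm z‖ with hnz
    have hd2 : d ⬝ᵥ d = nd ^ 2 := by
      rw [← hinner d d, hnd]; exact real_inner_self_eq_norm_sq _
    have hz2 : z ⬝ᵥ z = nz ^ 2 := by
      rw [← hinner z z, hnz]; exact real_inner_self_eq_norm_sq _
    have hnd0 : 0 ≤ nd := norm_nonneg _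
    have hnz0 : 0 ≤ nz := norm_nonneg _
    have hCS : d ⬝ᵥ (D *ᵥ z) ≤ nd * (δ * nz) := by
      have h1 : d ⬝ᵥ (D *ᵥ z) ≤ nd * ‖(EuclideanSpace.equiv (Fin n) ℝ).symm (D *ᵥ z)‖ := by
        rw [← hinner d (D *ᵥ z), hnd]; exact real_inner_le_norm _ _
      have h2 : ‖(EuclideanSpace.equiv (Fin n) ℝ).symm (D *ᵥ z)‖ ≤ ‖D‖ * nz :=
        Matrix.l2_opNorm_mulVec D ((EuclideanSpace.equiv (Fin n) ℝ).symm z)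
      have h3 : ‖D‖ * nz ≤ δ * nz := mul_le_mul_of_nonneg_right hD hnz0
      have h4 : 0 ≤ ‖(EuclideanSpace.equiv (Fin n) ℝ).symm (D *ᵥ z)‖ := norm_nonneg _
      nlinarith [h1, h2, h3, hnd0]
    have key : 2 * (d ⬝ᵥ (D *ᵥ z)) ≤ ε₂ * (d ⬝ᵥ d) + δ ^ 2 / ε₂ * (z ⬝ᵥ z) := by
      rw [hd2, hz2]
      have h5 : ε₂ * nd ^ 2 + δ ^ 2 / ε₂ * nz ^ 2 - 2 * (nd * (δ * nz)) =
          (ε₂ * nd - δ * nz) ^ 2 / ε₂ := by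
        field_simp
        ring
      nlinarith [div_nonneg (sq_nonneg (ε₂ * nd - δ * nz)) hε.le, hCS, h5]
    have hcross : a ⬝ᵥ d ᵥ* (D * H) + b ⬝ᵥ d ᵥ* D = d ⬝ᵥ (D *ᵥ z) := by
      rw [hz]
      simp only [Matrix.mulVec_add, dotProduct_add, Matrix.dotProduct_mulVec,
        Matrix.vecMul_vecMul]
      simp only [dotProduct_comm]
    have hyz1 : y ⬝ᵥ H *ᵥ a = δ / ε₂ * (z ⬝ᵥ (H *ᵥ a)) := by
      rw [hy]; simp [smul_dotProduct, smul_eq_mul]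
    have hyz2 : y ⬝ᵥ b = δ / ε₂ * (z ⬝ᵥ b) := by
      rw [hy]; simp [smul_dotProduct, smul_eq_mul]
    have hyy : y ⬝ᵥ y = (δ / ε₂) ^ 2 * (z ⬝ᵥ z) := by
      rw [hy]; simp [smul_dotProduct, dotProduct_smul, smul_eq_mul]; ring
    have hzz : z ⬝ᵥ z = z ⬝ᵥ (H *ᵥ a) + z ⬝ᵥ b := by
      have h := dotProduct_add z (H *ᵥ a) b
      rw [← hz] at h
      exact h
    have hrhs : ε₂ * (d ⬝ᵥ d) + 2 * δ * (y ⬝ᵥ H *ᵥ a) + 2 * δ * (y ⬝ᵥ b) - ε₂ * (y ⬝ᵥ y) =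
        ε₂ * (d ⬝ᵥ d) + δ ^ 2 / ε₂ * (z ⬝ᵥ z) := by
      rw [hyz1, hyz2, hyy, hzz]
      field_simp
      ring
    rw [hrhs] at hpos
    linarith [hpos, key, hcross]
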